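/- Under proportional pricing, adding another participant of either type strictly reduces every individual's premium: the prices pL(nL, nH) = V·(rL + b·RL/√(RL·nL + RH·nH)) and pH(nL, nH) = V·(rH + b·RH/√(RL·nL + RH·nH)) are each strictly decreasing in nL and strictly decreasing in nH (over integers nL, nH ≥ 0 with nL + nH ≥ 1). Consequently each player's price is minimized at the grand coalition, so the grand coalition is core-stable under proportional pricing. -/

import Mathlib

private lemma price_lt (V b r R : ℝ) (hV : 0 < V) (hb : 0 < b) (hR : 0 < R)
    {s t : ℝ} (hs : 0 < s) (hst : s < t) :
    V * (r + b * R / Real.sqrt t) < V * (r + b * R / Real.sqrt s) := by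
  have hss : 0 < Real.sqrt s := Real.sqrt_pos.mpr hs
  have h : Real.sqrt s < Real.sqrt t := Real.sqrt_lt_sqrt hs.le hst
  have : b * R / Real.sqrt t < b * R / Real.sqrt s :=
    div_lt_div_of_pos_left (by positivity) hss h
  have := (add_lt_add_iff_left r).mpr this
  exact mul_lt_mul_of_pos_left this hV

private lemma price_le (V b r R : ℝ) (hV : 0 < V) (hb : 0 < b) (hR : 0 < R)
    {s t : ℝ} (hs : 0 < s) (hst : s ≤ t) :
    V * (r + b * R / Real.sqrt t) ≤ V * (r + b * R / Real.sqrt s) := by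
  rcases eq_or_lt_of_le hst with rfl | h
  · exact le_rfl
  · exact (price_lt V b r R hV hb hR hs h).le

/-- Under proportional pricing, adding another participant of either type
strictly reduces every individual's premium; consequently each player's price
is minimized at the grand coalition, so the grand coalition is core-stable. -/
theorem proportional_pricing_strict_anti_and_stable
    (V b rL rH : ℝ) (hV : 0 < V) (hb : 0 < b)
    (hrL : 0 < rL) (hLH : rL < rH) (hrH : rH < 1 / 2)
    (RL RH : ℝ) (hRL : RL = rL * (1 - rL)) (hRH : RH = rH * (1 - rH))
    (pL pH : ℕ → ℕ → ℝ)
    (hpL : ∀ nL nH : ℕ, pL nL nH =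
      V * (rL + b * RL / Real.sqrt (RL * (nL : ℝ) + RH * (nH : ℝ))))
    (hpH : ∀ nL nH : ℕ, pH nL nH =
      V * (rH + b * RH / Real.sqrt (RL * (nL : ℝ) + RH * (nH : ℝ)))) :
    (∀ nL nH : ℕ, 1 ≤ nL + nH →
      pL (nL + 1) nH < pL nL nH ∧ pL nL (nH + 1) < pL nL nH ∧
      pH (nL + 1) nH < pH nL nH ∧ pH nL (nH + 1) < pH nL nH) ∧
    (∀ NL NH nL nH : ℕ, nL ≤ NL → nH ≤ NH → 1 ≤ nL + nH →
      pL NL NH ≤ pL nL nH ∧ pH NL NH ≤ pH nL nH) := by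
  have hRLpos : 0 < RL := by
    have : 0 < 1 - rL := by linarith
    rw [hRL]; positivity
  have hRHpos : 0 < RH := by
    have h1 : 0 < rH := lt_trans hrL hLH
    have : 0 < 1 - rH := by linarith
    rw [hRH]; positivity
  have hSpos : ∀ nL nH : ℕ, 1 ≤ nL + nH → 0 < RL * (nL : ℝ) + RH * (nH : ℝ) := by
    intro nL nH h
    have : (1:ℝ) ≤ (nL : ℝ) + (nH : ℝ) := by exact_mod_cast h
    rcases Nat.eq_zero_or_pos nL with h0 | h1
    · have hH : 1 ≤ nH := by omega
      have : (1:ℝ) ≤ (nH : ℝ) := by exact_mod_cast hH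
      have : 0 < RH * (nH : ℝ) := by nlinarith
      have hnn : 0 ≤ RL * (nL : ℝ) := by positivity
      linarith
    · have : (1:ℝ) ≤ (nL : ℝ) := by exact_mod_cast h1
      have : 0 < RL * (nL : ℝ) := by nlinarith
      have hnn : 0 ≤ RH * (nH : ℝ) := by positivity
      linarith
  constructor
  · intro nL nH h
    have hs := hSpos nL nH h
    have hL1 : RL * (nL : ℝ) + RH * (nH : ℝ) < RL * ((nL : ℝ) + 1) + RH * (nH : ℝ) := by
      nlinarith
    have hL2 : RL * (nL : ℝ) + RH * (nH : ℝ) < RL * (nL : ℝ) + RH * ((nH : ℝ) + 1) := by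
      nlinarith
    refine ⟨?_, ?_, ?_, ?_⟩ <;>
      simp only [hpL, hpH, Nat.cast_add, Nat.cast_one]
    · exact price_lt V b rL RL hV hb hRLpos hs hL1
    · exact price_lt V b rL RL hV hb hRLpos hs hL2
    · exact price_lt V b rH RH hV hb hRHpos hs hL1
    · exact price_lt V b rH RH hV hb hRHpos hs hL2
  · intro NL NH nL nH h1 h2 h
    have hs := hSpos nL nH h
    have hle : RL * (nL : ℝ) + RH * (nH : ℝ) ≤ RL * (NL : ℝ) + RH * (NH : ℝ) := by
      have c1 : (nL : ℝ) ≤ (NL : ℝ) := by exact_mod_cast h1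
      have c2 : (nH : ℝ) ≤ (NH : ℝ) := by exact_mod_cast h2
      nlinarith
    constructor <;> simp only [hpL, hpH]
    · exact price_le V b rL RL hV hb hRLpos hs hle
    · exact price_le V b rH RH hV hb hRHpos hs hle
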